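/- arXiv:2309.06998 — 5 statements merged into one kernel-verified Lean document; each statement's English description precedes it below -/
import Mathlib

section
/- (Strong duality / affine Farkas lemma) Let a ∈ ℝⁿ, b ∈ ℝ, M ∈ ℝ^{m×n} and q ∈ ℝ^m, and suppose the polyhedron 𝒳 = {x ∈ ℝⁿ : M x ≤ q} is nonempty. Then the inequality a·x ≤ b holds for every x ∈ 𝒳 if and only if there exists λ ∈ ℝ^m with λ ≥ 0 (entrywise), Mᵀ λ = a and λ·q ≤ b. -/
open Matrix Finset

open scoped InnerProductSpace

section Cara
variable {ι : Type*} [Fintype ι] {H : Type*} [AddCommGroup H] [Module ℝ H]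

open Classical in
lemma cara_aux (v : ι → H) :
    ∀ (N : ℕ) (c : ι → ℝ), 0 ≤ c → (Finset.univ.filter (fun i => c i ≠ 0)).card ≤ N →
      ∃ c' : ι → ℝ, 0 ≤ c' ∧ ∑ i, c' i • v i = ∑ i, c i • v i ∧
        LinearIndependent ℝ (fun i : {i // c' i ≠ 0} => v i) := by
  intro N
  induction N with
  | zero =>
    intro c hc hcard
    have hz : ∀ i, c i = 0 := by
      intro i
      by_contra h
      have hmem : i ∈ Finset.univ.filter (fun i => c i ≠ 0) := by simp [h]
      have := Finset.card_pos.mpr ⟨i, hmem⟩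
      omega
    have : IsEmpty {i // c i ≠ 0} := ⟨fun ⟨i, hi⟩ => hi (hz i)⟩
    exact ⟨c, hc, rfl, linearIndependent_empty_type⟩
  | succ N ih =>
    intro c hc hcard
    by_cases hli : LinearIndependent ℝ (fun i : {i // c i ≠ 0} => v i)
    · exact ⟨c, hc, rfl, hli⟩
    · obtain ⟨g, hgsum, j, hgj⟩ := Fintype.not_linearIndependent_iff.mp hli
      -- WLOG some entry of g is positive
      obtain ⟨g, hgsum, j, hgj⟩ :
          ∃ g : {i // c i ≠ 0} → ℝ, ∑ i, g i • v i = 0 ∧ ∃ j, 0 < g j := by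
        rcases lt_or_gt_of_ne hgj with h | h
        · exact ⟨-g, by simpa using hgsum, j, by simpa using h⟩
        · exact ⟨g, hgsum, j, h⟩
      -- extend g to d : ι → ℝ
      set d : ι → ℝ := fun i => if h : c i ≠ 0 then g ⟨i, h⟩ else 0 with hd
      have hd_of_czero : ∀ i, c i = 0 → d i = 0 := by
        intro i hi; simp [hd, hi]
      have hdsum : ∑ i, d i • v i = 0 := by
        rw [show (∑ i, d i • v i) = ∑ i ∈ Finset.univ.filter (fun i => c i ≠ 0), d i • v i by
          refine (Finset.sum_filter_of_ne ?_).symm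
          intro i _ h
          by_contra hci
          exact h (by simp [hd_of_czero i hci])]
        rw [Finset.sum_subtype (p := fun i => c i ≠ 0) _ (by simp) (fun i => d i • v i)]
        rw [← hgsum]
        refine Finset.sum_congr rfl fun i _ => ?_
        simp [hd, i.2]
      -- positive-part minimization
      have hdj : 0 < d j.1 := by simpa [hd, j.2] using hgj
      have hPne : (Finset.univ.filter (fun i => 0 < d i)).Nonempty :=
        ⟨j.1, by simp [hdj]⟩
      obtain ⟨i₀, hi₀mem, hi₀min⟩ :=
        Finset.exists_min_image (Finset.univ.filter (fun i => 0 < d i)) (fun i => c i / d i) hPne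
      have hdi₀ : 0 < d i₀ := by simpa using hi₀mem
      set t : ℝ := c i₀ / d i₀ with ht
      have ht0 : 0 ≤ t := div_nonneg (hc i₀) hdi₀.le
      set c'' : ι → ℝ := fun i => c i - t * d i with hc''
      have hc''nn : 0 ≤ c'' := by
        intro i
        by_cases hdi : 0 < d i
        · have := hi₀min i (by simp [hdi])
          have h2 : t * d i ≤ c i := (le_div_iff₀ hdi).mp this
          simpa [hc''] using sub_nonneg.mpr h2
        · push_neg at hdi
          have : t * d i ≤ 0 := mul_nonpos_of_nonneg_of_nonpos ht0 hdi
          have hci : (0:ℝ) ≤ c i := hc i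
          show (0:ℝ) ≤ c i - t * d i
          linarith
      have hc''i₀ : c'' i₀ = 0 := by
        simp [hc'', ht, div_mul_cancel₀ _ (ne_of_gt hdi₀)]
      have hsupp : ∀ i, c'' i ≠ 0 → c i ≠ 0 := by
        intro i h hci
        exact h (by simp [hc'', hd_of_czero i hci, hci])
      have hci₀ : c i₀ ≠ 0 := by
        intro h
        rw [hd_of_czero i₀ h] at hdi₀
        exact lt_irrefl _ hdi₀
      have hcard' : (Finset.univ.filter (fun i => c'' i ≠ 0)).card ≤ N := by
        have hss : Finset.univ.filter (fun i => c'' i ≠ 0) ⊆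
            (Finset.univ.filter (fun i => c i ≠ 0)).erase i₀ := by
          intro i hi
          simp only [Finset.mem_filter, Finset.mem_univ, true_and] at hi
          refine Finset.mem_erase.mpr ⟨?_, by simp [hsupp i hi]⟩
          rintro rfl
          exact hi hc''i₀
        calc (Finset.univ.filter (fun i => c'' i ≠ 0)).card
            ≤ ((Finset.univ.filter (fun i => c i ≠ 0)).erase i₀).card := Finset.card_le_card hss
          _ = (Finset.univ.filter (fun i => c i ≠ 0)).card - 1 := by
              rw [Finset.card_erase_of_mem (by simp [hci₀])]
          _ ≤ N := by omega
      have hsum'' : ∑ i, c'' i • v i = ∑ i, c i • v i := by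
        simp only [hc'', sub_smul, Finset.sum_sub_distrib]
        have : ∑ i, (t * d i) • v i = t • ∑ i, d i • v i := by
          rw [Finset.smul_sum]
          exact Finset.sum_congr rfl fun i _ => by rw [smul_smul]
        rw [this, hdsum, smul_zero, sub_zero]
      obtain ⟨c', h1, h2, h3⟩ := ih c'' hc''nn hcard'
      exact ⟨c', h1, h2.trans hsum'', h3⟩
end Cara

section Closed
variable {ι : Type*} [Fintype ι] {H : Type*} [NormedAddCommGroup H]
  [InnerProductSpace ℝ H] [FiniteDimensional ℝ H]

open Classical in
lemma coneSet_isClosed (v : ι → H) :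
    IsClosed {x : H | ∃ c : ι → ℝ, 0 ≤ c ∧ ∑ i, c i • v i = x} := by
  have key : {x : H | ∃ c : ι → ℝ, 0 ≤ c ∧ ∑ i, c i • v i = x} =
      ⋃ (S : Set ι) (_ : LinearIndependent ℝ (fun i : S => v i)),
        (fun d : S → ℝ => ∑ i : S, d i • v (i : ι)) '' {d | 0 ≤ d} := by
    ext x
    simp only [Set.mem_setOf_eq, Set.mem_iUnion, Set.mem_image]
    constructor
    · rintro ⟨c, hc, rfl⟩
      obtain ⟨c', hc', hsum, hli⟩ := cara_aux v
        ((Finset.univ.filter (fun i => c i ≠ 0)).card) c hc le_rfl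
      refine ⟨{i | c' i ≠ 0}, hli, fun i => c' i, fun i => hc' i, ?_⟩
      rw [← hsum]
      rw [show (∑ i, c' i • v i) = ∑ i ∈ Finset.univ.filter (fun i => c' i ≠ 0), c' i • v i by
        refine (Finset.sum_filter_of_ne ?_).symm
        intro i _ h
        by_contra hci
        exact h (by simp [hci])]
      rw [Finset.sum_subtype (p := fun i => c' i ≠ 0) _ (by simp) (fun i => c' i • v i)]
      exact Finset.sum_congr (by congr!) fun i _ => rfl
    · rintro ⟨S, hS, d, hd, rfl⟩
      refine ⟨fun i => if h : i ∈ S then d ⟨i, h⟩ else 0, ?_, ?_⟩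
      · intro i
        by_cases h : i ∈ S <;> simp [h]
        exact hd ⟨i, h⟩
      · rw [show (∑ i, (if h : i ∈ S then d ⟨i, h⟩ else 0) • v i)
            = ∑ i ∈ Finset.univ.filter (fun i => i ∈ S),
                (if h : i ∈ S then d ⟨i, h⟩ else 0) • v i by
          refine (Finset.sum_filter_of_ne ?_).symm
          intro i _ h
          by_contra hci
          exact h (by simp [hci])]
        rw [Finset.sum_subtype (p := fun i => i ∈ S) _ (by simp)
          (fun i => (if h : i ∈ S then d ⟨i, h⟩ else 0) • v i)]
        refine Finset.sum_congr rfl fun i _ => ?_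
        simp [i.2]
  rw [key]
  refine isClosed_iUnion_of_finite fun S => ?_
  by_cases hS : LinearIndependent ℝ (fun i : S => v i)
  · simp only [hS, Set.iUnion_true]
    set ψ : (S → ℝ) →ₗ[ℝ] H :=
      { toFun := fun d => ∑ i : S, d i • v (i : ι)
        map_add' := by
          intro d d'
          simp [add_smul, Finset.sum_add_distrib]
        map_smul' := by
          intro t d
          simp [smul_smul, Finset.smul_sum] } with hψ
    have hker : LinearMap.ker ψ = ⊥ := by
      rw [LinearMap.ker_eq_bot']
      intro d hd0
      funext i
      exact Fintype.linearIndependent_iff.mp hS d hd0 i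
    have hclosed : IsClosed {d : S → ℝ | 0 ≤ d} := by
      have : {d : S → ℝ | 0 ≤ d} = ⋂ i, {d | 0 ≤ d i} := by
        ext d; simp [Pi.le_def]
      rw [this]
      exact isClosed_iInter fun i => isClosed_le continuous_const (continuous_apply i)
    exact (ψ.isClosedEmbedding_of_injective hker).isClosedMap _ hclosed
  · simp [hS]
end Closed

section Farkas
variable {ι : Type*} [Fintype ι] {H : Type*} [NormedAddCommGroup H]
  [InnerProductSpace ℝ H] [FiniteDimensional ℝ H]

open Classical in
lemma farkas_cone (v : ι → H) (u : H)
    (h : ∀ y : H, (∀ i, 0 ≤ ⟪v i, y⟫_ℝ) → 0 ≤ ⟪u, y⟫_ℝ) :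
    ∃ c : ι → ℝ, 0 ≤ c ∧ ∑ i, c i • v i = u := by
  by_contra hu
  set K : ConvexCone ℝ H :=
    { carrier := {x : H | ∃ c : ι → ℝ, 0 ≤ c ∧ ∑ i, c i • v i = x}
      smul_mem' := by
        rintro t ht x ⟨c, hc, rfl⟩
        exact ⟨t • c, fun i => mul_nonneg ht.le (hc i), by
          simp [Finset.smul_sum, smul_smul]⟩
      add_mem' := by
        rintro x ⟨c, hc, rfl⟩ y ⟨c', hc', rfl⟩
        exact ⟨c + c', fun i => add_nonneg (hc i) (hc' i), by
          simp [add_smul, Finset.sum_add_distrib]⟩ } with hK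
  have hne : (K : Set H).Nonempty := ⟨0, ⟨0, le_refl _, by simp⟩⟩
  have hclosed : IsClosed (K : Set H) := coneSet_isClosed v
  have hmem : u ∉ K := fun hm => hu hm
  obtain ⟨y, hy1, hy2⟩ :=
    ProperCone.hyperplane_separation' (x₀ := u)
      ({ carrier := (K : Set H), add_mem' := fun ha hb => K.add_mem ha hb,
         zero_mem' := ⟨0, le_refl _, by simp⟩,
         smul_mem' := fun c x hx => by
           obtain ⟨d, hd, rfl⟩ := hx
           exact ⟨(c : ℝ) • d, fun i => mul_nonneg c.2 (hd i), by
             simp [Finset.smul_sum, smul_smul]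
             exact Finset.sum_congr rfl fun i _ => by rw [mul_smul]; rfl⟩,
         isClosed' := hclosed } : ProperCone ℝ H) hmem
  have hvmem : ∀ i, v i ∈ K := by
    intro i
    refine ⟨Pi.single i 1, ?_, ?_⟩
    · intro j
      by_cases hij : j = i <;> simp [hij, Pi.single_apply]
    · simp [Pi.single_apply, Finset.sum_ite_eq']
  have := h y (fun i => hy1 (v i) (hvmem i))
  linarith
end Farkas

def pr {n : ℕ} (x : Fin n → ℝ) (t : ℝ) : EuclideanSpace ℝ (Fin (n + 1)) := WithLp.toLp 2 (Fin.snoc x t : Fin (n + 1) → ℝ)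

lemma inner_pr {n : ℕ} (w x : Fin n → ℝ) (s t : ℝ) :
    ⟪pr w s, pr x t⟫_ℝ = w ⬝ᵥ x + s * t := by
  rw [PiLp.inner_apply, Fin.sum_univ_castSucc]
  simp [pr, RCLike.inner_apply, dotProduct, mul_comm]

/-- Strong duality / affine Farkas lemma: if the polyhedron `{x : M x ≤ q}` is nonempty,
then `a ⬝ x ≤ b` holds on all of it iff there is an entrywise nonnegative multiplier `lam`
with `Mᵀ lam = a` and `lam ⬝ q ≤ b`. -/
theorem affine_farkas {n m : ℕ} (a : Fin n → ℝ) (b : ℝ)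
    (M : Matrix (Fin m) (Fin n) ℝ) (q : Fin m → ℝ)
    (hne : ∃ x : Fin n → ℝ, M *ᵥ x ≤ q) :
    (∀ x : Fin n → ℝ, M *ᵥ x ≤ q → a ⬝ᵥ x ≤ b) ↔
      ∃ lam : Fin m → ℝ, 0 ≤ lam ∧ Mᵀ *ᵥ lam = a ∧ lam ⬝ᵥ q ≤ b := by
  classical
  constructor
  · intro hall
    obtain ⟨x₀, hx₀⟩ := hne
    set v : (Fin m ⊕ Unit) → EuclideanSpace ℝ (Fin (n + 1)) :=
      Sum.elim (fun i => pr (M i) (-q i)) (fun _ => pr 0 (-1)) with hv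
    set u : EuclideanSpace ℝ (Fin (n + 1)) := pr a (-b) with hu
    have key : ∀ y : EuclideanSpace ℝ (Fin (n + 1)),
        (∀ i, 0 ≤ ⟪v i, y⟫_ℝ) → 0 ≤ ⟪u, y⟫_ℝ := by
      intro y hy
      set x : Fin n → ℝ := fun j => y j.castSucc with hxdef
      set t : ℝ := y (Fin.last n) with htdef
      have hyeq : y = pr x t := by
        ext j
        refine Fin.lastCases ?_ ?_ j
        · simp [pr, htdef]
        · intro j'; simp [pr, hxdef]
      rw [hyeq] at hy ⊢
      have hy1 : ∀ i : Fin m, 0 ≤ M i ⬝ᵥ x + (-q i) * t := by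
        intro i
        have := hy (Sum.inl i)
        rw [hv] at this
        simp only [Sum.elim_inl] at this
        rwa [inner_pr] at this
      have ht : t ≤ 0 := by
        have := hy (Sum.inr ())
        rw [hv] at this
        simp only [Sum.elim_inr] at this
        rw [inner_pr, zero_dotProduct, zero_add] at this
        linarith
      rw [hu, inner_pr]
      rcases eq_or_lt_of_le ht with htz | htneg
      · -- t = 0
        rw [htz, mul_zero, add_zero]
        by_contra hax
        push_neg at hax
        have hax' : a ⬝ᵥ x < 0 := hax
        have hMx : ∀ i, 0 ≤ (M *ᵥ x) i := by
          intro i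
          have := hy1 i
          rw [htz] at this
          simpa [Matrix.mulVec, dotProduct] using this
        set s : ℝ := max ((a ⬝ᵥ x₀ - b - 1) / (a ⬝ᵥ x)) 0 with hs
        have hs0 : 0 ≤ s := le_max_right _ _
        have hfeas : M *ᵥ (x₀ - s • x) ≤ q := by
          intro i
          rw [Matrix.mulVec_sub, Matrix.mulVec_smul]
          have h1 := hx₀ i
          have h2 := hMx i
          have h3 : 0 ≤ s * (M *ᵥ x) i := mul_nonneg hs0 h2
          simp only [Pi.sub_apply, Pi.smul_apply, smul_eq_mul]
          linarith
        have happ := hall _ hfeas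
        rw [dotProduct_sub, dotProduct_smul] at happ
        have hq0 : (a ⬝ᵥ x₀ - b - 1) / (a ⬝ᵥ x) ≤ s := le_max_left _ _
        have hmul : s * (a ⬝ᵥ x) ≤ (a ⬝ᵥ x₀ - b - 1) / (a ⬝ᵥ x) * (a ⬝ᵥ x) :=
          mul_le_mul_of_nonpos_right hq0 hax'.le
        rw [div_mul_cancel₀ _ (ne_of_lt hax')] at hmul
        simp only [smul_eq_mul] at happ
        linarith
      · -- t < 0
        set s : ℝ := -t with hsdef
        have hs : 0 < s := by simp [hsdef]; linarith
        have hinv : s * s⁻¹ = 1 := mul_inv_cancel₀ hs.ne'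
        have hinv' : s⁻¹ * s = 1 := inv_mul_cancel₀ hs.ne'
        set z : Fin n → ℝ := (-s⁻¹) • x with hz
        have hfeas : M *ᵥ z ≤ q := by
          intro i
          rw [hz, Matrix.mulVec_smul]
          have h1 := hy1 i
          have h1' : 0 ≤ M i ⬝ᵥ x + q i * s := by rw [hsdef]; linarith
          have hMxi : (M *ᵥ x) i = M i ⬝ᵥ x := rfl
          simp only [Pi.smul_apply, smul_eq_mul, hMxi]
          have h2 := mul_nonneg (inv_nonneg.mpr hs.le) h1'
          have h3 : s⁻¹ * (M i ⬝ᵥ x + q i * s)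
              = s⁻¹ * (M i ⬝ᵥ x) + q i * (s⁻¹ * s) := by ring
          rw [h3, hinv', mul_one] at h2
          linarith
        have happ := hall _ hfeas
        rw [hz, dotProduct_smul] at happ
        simp only [smul_eq_mul] at happ
        have h2 := mul_le_mul_of_nonneg_left happ hs.le
        have hts : t = -s := by rw [hsdef]; ring
        rw [hts]
        have h4 : s * (-s⁻¹ * (a ⬝ᵥ x)) = -(s * s⁻¹ * (a ⬝ᵥ x)) := by ring
        rw [hinv, one_mul] at h4
        rw [h4] at h2
        linarith
    obtain ⟨c, hc, hsum⟩ := farkas_cone v u key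
    refine ⟨fun i => c (Sum.inl i), fun i => hc (Sum.inl i), ?_, ?_⟩
    · funext j
      have hj := congrArg
        (fun w : EuclideanSpace ℝ (Fin (n + 1)) => ⟪w, pr (Pi.single j 1) 0⟫_ℝ) hsum
      simp only [Fintype.sum_sum_type, inner_add_left, sum_inner, real_inner_smul_left] at hj
      rw [hu] at hj
      simp only [hv, Sum.elim_inl, Sum.elim_inr, inner_pr,
        dotProduct_single, zero_dotProduct, mul_zero, add_zero, mul_one,
        Finset.univ_unique, Finset.sum_singleton, zero_add, Finset.sum_const_zero] at hj
      simp only [Pi.zero_apply, mul_zero, add_zero] at hj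
      show Mᵀ j ⬝ᵥ (fun i => c (Sum.inl i)) = a j
      simp only [dotProduct, Matrix.transpose_apply]
      rw [← hj]
      exact Finset.sum_congr rfl fun i _ => mul_comm _ _
    · have hj := congrArg
        (fun w : EuclideanSpace ℝ (Fin (n + 1)) => ⟪w, pr 0 1⟫_ℝ) hsum
      simp only [Fintype.sum_sum_type, inner_add_left, sum_inner, real_inner_smul_left] at hj
      rw [hu] at hj
      simp only [hv, Sum.elim_inl, Sum.elim_inr, inner_pr,
        dotProduct_zero, mul_one, zero_add, neg_mul, one_mul,
        Finset.univ_unique, Finset.sum_singleton] at hj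
      have hc0 : 0 ≤ c (Sum.inr ()) := hc (Sum.inr ())
      have : (fun i => c (Sum.inl i)) ⬝ᵥ q = b - c (Sum.inr ()) := by
        rw [dotProduct]
        have : ∑ i : Fin m, c (Sum.inl i) * q i = -∑ i : Fin m, c (Sum.inl i) * (-q i) := by
          rw [← Finset.sum_neg_distrib]
          exact Finset.sum_congr rfl fun i _ => by ring
        rw [this]
        linarith [hj]
      rw [this]
      linarith
  · rintro ⟨lam, hlam, hMl, hlq⟩ x hx
    calc a ⬝ᵥ x = (Mᵀ *ᵥ lam) ⬝ᵥ x := by rw [hMl]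
      _ = lam ⬝ᵥ (M *ᵥ x) := by
          rw [Matrix.mulVec_transpose]
          exact (Matrix.dotProduct_mulVec lam M x).symm
      _ ≤ lam ⬝ᵥ q := Finset.sum_le_sum fun i _ =>
          mul_le_mul_of_nonneg_left (hx i) (hlam i)
      _ ≤ b := hlq
end

section
/- (Equivalence of invariance conditions) Let S = convexHull{x¹,…,x^{v_s}} ⊆ ℝⁿ for finitely many points xⁱ ∈ ℝⁿ, let U ⊆ ℝ^m be a convex set, let P = convexHull{p¹,…,p^{v_p}} ⊆ ℝ^s for finitely many points pʲ ∈ ℝ^s, let W ⊆ ℝⁿ be any set, and let ℳ ⊆ ℝ^{n×(n+m)s} be any set of matrices. Then the following are equivalent: (i) for every x ∈ S there exists u ∈ U such that for every p ∈ P, every M ∈ ℳ and every w ∈ W, M·[p⊗x; p⊗u] + w ∈ S; (ii) there exist vertex inputs u¹,…,u^{v_s} ∈ U such that for every i ∈ {1,…,v_s}, every j ∈ {1,…,v_p}, every M ∈ ℳ and every w ∈ W, M·[pʲ⊗xⁱ; pʲ⊗uⁱ] + w ∈ S. -/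
open Matrix

/-- Kronecker product of two (column) vectors: the entry of `vkron p x` at index `(j, i)`
is `p j * x i`. -/
def vkron {s a : ℕ} (p : Fin s → ℝ) (x : Fin a → ℝ) : Fin s × Fin a → ℝ :=
  fun ji => p ji.1 * x ji.2

lemma exists_convex_weights {k : ℕ} {E : Type*} [AddCommGroup E] [Module ℝ E]
    (y : Fin k → E) {z : E} (hz : z ∈ convexHull ℝ (Set.range y)) :
    ∃ c : Fin k → ℝ, (∀ i, 0 ≤ c i) ∧ (∑ i, c i) = 1 ∧ (∑ i, c i • y i) = z := by
  rw [convexHull_range_eq_exists_affineCombination] at hz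
  obtain ⟨t, w, hw₀, hw₁, rfl⟩ := hz
  refine ⟨fun i => if i ∈ t then w i else 0, ?_, ?_, ?_⟩
  · intro i
    by_cases h : i ∈ t <;> simp [h]
    exact hw₀ _ h
  · rw [Finset.sum_ite_mem, Finset.univ_inter]; exact hw₁
  · rw [Finset.affineCombination_eq_linear_combination _ _ _ hw₁]
    simp [ite_smul]

/-- Equivalence of invariance conditions: the pointwise robust-invariance condition (i)
over the polytope `S = conv{x¹,…,x^{v_s}}` and all scheduling parameters in
`P = conv{p¹,…,p^{v_p}}` is equivalent to the vertex condition (ii), for any convex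
input set `U`, any disturbance set `W` and any set of models `ℳ`. -/
theorem invariance_condition_equiv {n m s vs vp : ℕ}
    (x : Fin vs → (Fin n → ℝ)) (U : Set (Fin m → ℝ)) (hU : Convex ℝ U)
    (p : Fin vp → (Fin s → ℝ)) (W : Set (Fin n → ℝ))
    (ℳ : Set (Matrix (Fin n) ((Fin s × Fin n) ⊕ (Fin s × Fin m)) ℝ))
    (S : Set (Fin n → ℝ)) (hS : S = convexHull ℝ (Set.range x))
    (P : Set (Fin s → ℝ)) (hP : P = convexHull ℝ (Set.range p)) :
    (∀ x₀ ∈ S, ∃ u ∈ U, ∀ p₀ ∈ P, ∀ M ∈ ℳ, ∀ w ∈ W,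
        M *ᵥ Sum.elim (vkron p₀ x₀) (vkron p₀ u) + w ∈ S) ↔
      (∃ u : Fin vs → (Fin m → ℝ), (∀ i, u i ∈ U) ∧
        ∀ (i : Fin vs) (j : Fin vp), ∀ M ∈ ℳ, ∀ w ∈ W,
          M *ᵥ Sum.elim (vkron (p j) (x i)) (vkron (p j) (u i)) + w ∈ S) := by
  constructor
  · intro h
    choose u hu hcond using fun i =>
      h (x i) (hS ▸ subset_convexHull ℝ _ (Set.mem_range_self i))
    exact ⟨u, hu, fun i j M hM w hw =>
      hcond i (p j) (hP ▸ subset_convexHull ℝ _ (Set.mem_range_self j)) M hM w hw⟩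
  · rintro ⟨u, huU, hcond⟩ x₀ hx₀
    rw [hS] at hx₀
    obtain ⟨c, hc0, hc1, hcx⟩ := exists_convex_weights x hx₀
    refine ⟨∑ i, c i • u i, hU.sum_mem (fun i _ => hc0 i) hc1 (fun i _ => huU i), ?_⟩
    intro p₀ hp₀ M hM w hw
    rw [hP] at hp₀
    obtain ⟨d, hd0, hd1, hdp⟩ := exists_convex_weights p hp₀
    have hSconv : Convex ℝ S := hS ▸ convex_convexHull ℝ _
    have key : M *ᵥ Sum.elim (vkron p₀ x₀) (vkron p₀ (∑ i, c i • u i)) + w =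
        ∑ ij : Fin vs × Fin vp, (c ij.1 * d ij.2) •
          (M *ᵥ Sum.elim (vkron (p ij.2) (x ij.1)) (vkron (p ij.2) (u ij.1)) + w) := by
      have hv : Sum.elim (vkron p₀ x₀) (vkron p₀ (∑ i, c i • u i)) =
          ∑ ij : Fin vs × Fin vp, (c ij.1 * d ij.2) •
            Sum.elim (vkron (p ij.2) (x ij.1)) (vkron (p ij.2) (u ij.1)) := by
        funext kl
        rw [← hcx, ← hdp]
        cases kl with
        | inl kl =>
          simp only [Finset.sum_apply, Pi.smul_apply, Sum.elim_inl, vkron, smul_eq_mul,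
            Pi.smul_apply, Finset.sum_apply]
          rw [Fintype.sum_prod_type]
          rw [Finset.sum_mul_sum]
          rw [Finset.sum_comm]
          apply Finset.sum_congr rfl; intro i _
          apply Finset.sum_congr rfl; intro j _
          ring
        | inr kl =>
          simp only [Finset.sum_apply, Pi.smul_apply, Sum.elim_inr, vkron, smul_eq_mul,
            Pi.smul_apply, Finset.sum_apply]
          rw [Fintype.sum_prod_type]
          rw [Finset.sum_mul_sum]
          rw [Finset.sum_comm]
          apply Finset.sum_congr rfl; intro i _
          apply Finset.sum_congr rfl; intro j _
          ring
      have hsum1 : (∑ ij : Fin vs × Fin vp, c ij.1 * d ij.2) = 1 := by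
        rw [Fintype.sum_prod_type, ← Finset.sum_mul_sum, hc1, hd1, one_mul]
      have hmv : M *ᵥ (∑ ij : Fin vs × Fin vp, (c ij.1 * d ij.2) •
            Sum.elim (vkron (p ij.2) (x ij.1)) (vkron (p ij.2) (u ij.1))) =
          ∑ ij : Fin vs × Fin vp, (c ij.1 * d ij.2) •
            (M *ᵥ Sum.elim (vkron (p ij.2) (x ij.1)) (vkron (p ij.2) (u ij.1))) := by
        simp only [← Matrix.mulVecLin_apply, map_sum, _root_.map_smul]
      rw [hv, hmv]
      simp only [smul_add]
      rw [Finset.sum_add_distrib, ← Finset.sum_smul, hsum1, one_smul]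
    rw [key]
    exact hSconv.sum_mem (fun ij _ => mul_nonneg (hc0 _) (hd0 _))
      (by rw [Fintype.sum_prod_type, ← Finset.sum_mul_sum, hc1, hd1, one_mul])
      (fun ij _ => hcond ij.1 ij.2 M hM w hw)
end

section
/- (Vertex control law induces robust invariance) Let S = convexHull{x¹,…,x^{v_s}} ⊆ ℝⁿ, let U ⊆ ℝ^m be convex, let P = convexHull{p¹,…,p^{v_p}} ⊆ ℝ^s, let W ⊆ ℝⁿ, let ℳ ⊆ ℝ^{n×(n+m)s}, and let u¹,…,u^{v_s} ∈ U be such that for all i ∈ {1,…,v_s}, j ∈ {1,…,v_p}, all M ∈ ℳ and all w ∈ W, M·[pʲ⊗xⁱ; pʲ⊗uⁱ] + w ∈ S. Then for every x ∈ S and every λ ∈ ℝ^{v_s} with λ_i ≥ 0, Σ_i λ_i = 1 and x = Σ_i λ_i xⁱ, the input u := Σ_i λ_i uⁱ satisfies u ∈ U and, for every p ∈ P, every M ∈ ℳ and every w ∈ W, M·[p⊗x; p⊗u] + w ∈ S. -/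
open Matrix

/-- Vertex control law induces robust invariance: if the vertex invariance condition holds
for vertex inputs `u¹,…,u^{v_s} ∈ U`, then for any `x ∈ S` written as a convex combination
`x = Σ λ_i xⁱ`, the input `u = Σ λ_i uⁱ` lies in `U` and keeps the successor state in `S`
for every `p ∈ P`, every model `M ∈ ℳ` and every disturbance `w ∈ W`. -/
theorem vertex_control_invariance {n m s vs vp : ℕ}
    (x : Fin vs → (Fin n → ℝ)) (U : Set (Fin m → ℝ)) (hU : Convex ℝ U)
    (p : Fin vp → (Fin s → ℝ)) (W : Set (Fin n → ℝ))
    (ℳ : Set (Matrix (Fin n) ((Fin s × Fin n) ⊕ (Fin s × Fin m)) ℝ))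
    (S : Set (Fin n → ℝ)) (hS : S = convexHull ℝ (Set.range x))
    (P : Set (Fin s → ℝ)) (hP : P = convexHull ℝ (Set.range p))
    (u : Fin vs → (Fin m → ℝ)) (hu : ∀ i, u i ∈ U)
    (hinv : ∀ (i : Fin vs) (j : Fin vp), ∀ M ∈ ℳ, ∀ w ∈ W,
      M *ᵥ Sum.elim (vkron (p j) (x i)) (vkron (p j) (u i)) + w ∈ S) :
    ∀ x₀ ∈ S, ∀ lam : Fin vs → ℝ, (∀ i, 0 ≤ lam i) → (∑ i, lam i) = 1 →
      x₀ = ∑ i, lam i • x i →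
      (∑ i, lam i • u i) ∈ U ∧
        ∀ p₀ ∈ P, ∀ M ∈ ℳ, ∀ w ∈ W,
          M *ᵥ Sum.elim (vkron p₀ x₀) (vkron p₀ (∑ i, lam i • u i)) + w ∈ S := by
  intro x₀ hx₀ lam hlam hsum hx
  have hSconv : Convex ℝ S := hS ▸ convex_convexHull ℝ _
  refine ⟨hU.sum_mem (fun i _ => hlam i) hsum (fun i _ => hu i), ?_⟩
  intro p₀ hp₀ M hM w hw
  rw [hP, convexHull_eq] at hp₀
  obtain ⟨ι, t, μ, z, hμ0, hμ1, hz, hcm⟩ := hp₀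
  rw [Finset.centerMass_eq_of_sum_1 _ _ hμ1] at hcm
  have ht : t.Nonempty := by
    rw [Finset.nonempty_iff_ne_empty]
    rintro rfl
    simp at hμ1
  have hne : Nonempty (Fin vp) := by
    obtain ⟨j0, hj0⟩ := ht
    obtain ⟨k0, -⟩ := hz j0 hj0
    exact ⟨k0⟩
  have hch : ∀ j : ι, ∃ k : Fin vp, j ∈ t → p k = z j := by
    intro j
    by_cases hj : j ∈ t
    · obtain ⟨k, hk⟩ := hz j hj
      exact ⟨k, fun _ => hk⟩
    · exact ⟨Classical.arbitrary _, fun h => absurd h hj⟩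
  choose c hc using hch
  set u₀ : Fin m → ℝ := ∑ i, lam i • u i with hu₀
  -- pointwise expansions
  have hp₀a : ∀ a, p₀ a = ∑ j ∈ t, μ j * p (c j) a := by
    intro a
    rw [← hcm]
    simp only [Finset.sum_apply, Pi.smul_apply, smul_eq_mul]
    exact Finset.sum_congr rfl fun j hj => by rw [hc j hj]
  have hxa : ∀ b, x₀ b = ∑ i, lam i * x i b := by
    intro b; rw [hx]; simp
  have hua : ∀ b, u₀ b = ∑ i, lam i * u i b := by
    intro b; rw [hu₀]; simp
  -- key vector identity
  have key : Sum.elim (vkron p₀ x₀) (vkron p₀ u₀)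
      = ∑ j ∈ t, ∑ i, (μ j * lam i) •
          Sum.elim (vkron (p (c j)) (x i)) (vkron (p (c j)) (u i)) := by
    funext k
    simp only [Finset.sum_apply, Pi.smul_apply, smul_eq_mul]
    cases k with
    | inl a =>
        simp only [Sum.elim_inl, vkron]
        rw [hp₀a a.1, hxa a.2, Finset.sum_mul_sum]
        exact Finset.sum_congr rfl fun j _ => Finset.sum_congr rfl fun i _ => by ring
    | inr a =>
        simp only [Sum.elim_inr, vkron]
        rw [hp₀a a.1, hua a.2, Finset.sum_mul_sum]
        exact Finset.sum_congr rfl fun j _ => Finset.sum_congr rfl fun i _ => by ring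
  have hmv : M *ᵥ Sum.elim (vkron p₀ x₀) (vkron p₀ u₀) + w
      = ∑ j ∈ t, μ j • ∑ i, lam i •
          (M *ᵥ Sum.elim (vkron (p (c j)) (x i)) (vkron (p (c j)) (u i)) + w) := by
    have : M *ᵥ Sum.elim (vkron p₀ x₀) (vkron p₀ u₀)
        = ∑ j ∈ t, ∑ i, (μ j * lam i) •
            (M *ᵥ Sum.elim (vkron (p (c j)) (x i)) (vkron (p (c j)) (u i))) := by
      rw [key, ← M.mulVecLin_apply, map_sum]
      refine Finset.sum_congr rfl fun j _ => ?_
      rw [map_sum]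
      exact Finset.sum_congr rfl fun i _ => by rw [_root_.map_smul]; rfl
    rw [this]
    have hw1 : ∑ j ∈ t, ∑ i, (μ j * lam i) • w = w := by
      have : ∑ j ∈ t, ∑ i : Fin vs, (μ j * lam i) • w
          = (∑ j ∈ t, μ j * ∑ i, lam i) • w := by
        simp [Finset.sum_smul, Finset.mul_sum, mul_smul]
      rw [this, hsum]
      simp [hμ1]
    calc ∑ j ∈ t, ∑ i, (μ j * lam i) •
            (M *ᵥ Sum.elim (vkron (p (c j)) (x i)) (vkron (p (c j)) (u i))) + w
        = ∑ j ∈ t, ∑ i, (μ j * lam i) •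
            (M *ᵥ Sum.elim (vkron (p (c j)) (x i)) (vkron (p (c j)) (u i)) + w) := by
          simp only [smul_add, Finset.sum_add_distrib, hw1]
      _ = ∑ j ∈ t, μ j • ∑ i, lam i •
            (M *ᵥ Sum.elim (vkron (p (c j)) (x i)) (vkron (p (c j)) (u i)) + w) := by
          refine Finset.sum_congr rfl fun j _ => ?_
          rw [Finset.smul_sum]
          exact Finset.sum_congr rfl fun i _ => by rw [smul_smul]
  rw [hmv]
  refine hSconv.sum_mem (fun j hj => hμ0 j hj) hμ1 fun j hj => ?_
  exact hSconv.sum_mem (fun i _ => hlam i) hsum fun i _ => hinv i (c j) M hM w hw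
end

section
/- (Configuration-constrained vertex representation) Let C ∈ ℝ^{n_c×n} and σ ∈ ℝ^{n_c}, and let S(q) = { x ∈ ℝⁿ : C x ≤ q } for q ∈ ℝ^{n_c}. For an index set I ⊆ {1,…,n_c}, let F_I(q) = { x ∈ S(q) : (C x)_i = q_i for all i ∈ I }. Assume S(σ) is nonempty and bounded, and is entirely simple, i.e., for every index set I with F_I(σ) ≠ ∅ the rows {C_i : i ∈ I} of C are linearly independent. Let 𝒱 = { I ⊆ {1,…,n_c} : |I| = n and F_I(σ) ≠ ∅ }; for each I ∈ 𝒱 the n×n submatrix C_I (rows of C indexed by I) is invertible, and define the linear map V_I : ℝ^{n_c} → ℝⁿ by V_I(q) = C_I^{−1} q_I, where q_I ∈ ℝⁿ collects the entries of q indexed by I. Then for every q ∈ ℝ^{n_c} satisfying C·V_I(q) ≤ q for all I ∈ 𝒱, it holds that S(q) = convexHull{ V_I(q) : I ∈ 𝒱 }. -/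
open Matrix

lemma cone_caratheodory {E : Type*} [AddCommGroup E] [Module ℝ E] {ι : Type*} [DecidableEq ι]
    (v : ι → E) (T : Finset ι) :
    ∀ (l : ι → ℝ), (∀ i ∈ T, 0 ≤ l i) →
    ∃ T' ⊆ T, (LinearIndependent ℝ (fun i : T' => v i)) ∧
      ∃ l' : ι → ℝ, (∀ i ∈ T', 0 ≤ l' i) ∧ ∑ i ∈ T', l' i • v i = ∑ i ∈ T, l i • v i := by
  induction T using Finset.strongInduction with
  | _ T ih =>
    intro l hl
    by_cases hind : LinearIndependent ℝ (fun i : T => v i)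
    · exact ⟨T, le_refl _, hind, l, hl, rfl⟩
    · obtain ⟨g, hg0, i₀, hi₀⟩ := Fintype.not_linearIndependent_iff.mp hind
      set μ : ι → ℝ := fun i => if h : i ∈ T then g ⟨i, h⟩ else 0 with hμ
      have hμsum : ∑ i ∈ T, μ i • v i = 0 := by
        rw [← hg0, ← Finset.sum_attach T (fun i => μ i • v i)]
        refine Finset.sum_congr rfl fun i _ => ?_
        simp [hμ, i.2]
      have hμi₀ : μ (i₀ : ι) ≠ 0 := by simpa [hμ, i₀.2] using hi₀
      obtain ⟨ν, hνsum, hνi₀⟩ : ∃ ν : ι → ℝ,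
          (∑ i ∈ T, ν i • v i = 0) ∧ 0 < ν (i₀ : ι) := by
        rcases hμi₀.lt_or_gt with h | h
        · refine ⟨-μ, ?_, by simpa using h⟩
          simp only [Pi.neg_apply, neg_smul]
          rw [Finset.sum_neg_distrib, hμsum, neg_zero]
        · exact ⟨μ, hμsum, h⟩
      have hi₀T : (i₀ : ι) ∈ T := i₀.2
      set P : Finset ι := T.filter (fun i => 0 < ν i) with hP
      have hPne : P.Nonempty := ⟨i₀, by simp [hP, hi₀T, hνi₀]⟩
      obtain ⟨k, hkP, hkmin⟩ := P.exists_min_image (fun i => l i / ν i) hPne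
      have hkT : k ∈ T := (Finset.mem_filter.mp hkP).1
      have hνk : 0 < ν k := (Finset.mem_filter.mp hkP).2
      set t : ℝ := l k / ν k with ht
      have ht0 : 0 ≤ t := div_nonneg (hl k hkT) hνk.le
      set l' : ι → ℝ := fun i => l i - t * ν i with hl'
      have hl'nonneg : ∀ i ∈ T, 0 ≤ l' i := by
        intro i hiT
        by_cases hνi : 0 < ν i
        · have hiP : i ∈ P := Finset.mem_filter.mpr ⟨hiT, hνi⟩
          have := hkmin i hiP
          have : t * ν i ≤ l i := by
            rw [div_le_div_iff₀ hνk hνi] at this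
            rw [ht, div_mul_eq_mul_div, div_le_iff₀ hνk]
            linarith
          simp only [hl']; linarith
        · push_neg at hνi
          have : t * ν i ≤ 0 := mul_nonpos_of_nonneg_of_nonpos ht0 hνi
          have := hl i hiT
          simp only [hl']; linarith
      have hl'k : l' k = 0 := by
        simp only [hl', ht]; field_simp; simp
      have hsum' : ∑ i ∈ T, l' i • v i = ∑ i ∈ T, l i • v i := by
        simp only [hl', sub_smul, smul_smul]
        rw [Finset.sum_sub_distrib]
        have : ∑ i ∈ T, (t * ν i) • v i = t • ∑ i ∈ T, ν i • v i := by
          rw [Finset.smul_sum]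
          exact Finset.sum_congr rfl fun i _ => by rw [smul_smul]
        rw [this, hνsum]
        simp
      have herase : ∑ i ∈ T.erase k, l' i • v i = ∑ i ∈ T, l' i • v i := by
        apply Finset.sum_erase
        rw [hl'k, zero_smul]
      obtain ⟨T', hT'sub, hT'ind, l'', hl''0, hl''sum⟩ :=
        ih (T.erase k) (Finset.erase_ssubset hkT) l' (fun i hi => hl'nonneg i (Finset.mem_of_mem_erase hi))
      exact ⟨T', hT'sub.trans (Finset.erase_subset _ _), hT'ind, l'', hl''0,
        by rw [hl''sum, herase, hsum']⟩

lemma cone_isClosed {n : ℕ} {ι : Type*} [Fintype ι] [DecidableEq ι]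
    (v : ι → (Fin n → ℝ)) (J : Finset ι) :
    IsClosed {x : Fin n → ℝ | ∃ l : ι → ℝ, (∀ i, 0 ≤ l i) ∧ x = ∑ i ∈ J, l i • v i} := by
  -- each linearly independent sub-cone is closed
  have hsub : ∀ T : Finset ι, LinearIndependent ℝ (fun i : T => v i) →
      IsClosed {x : Fin n → ℝ | ∃ g : T → ℝ, (∀ i, 0 ≤ g i) ∧ x = ∑ i : T, g i • v i} := by
    intro T hT
    set L : (T → ℝ) →ₗ[ℝ] (Fin n → ℝ) :=
      ∑ i : T, LinearMap.smulRight (LinearMap.proj i) (v i) with hL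
    have hLapp : ∀ g : T → ℝ, L g = ∑ i : T, g i • v i := by
      intro g; simp [hL, LinearMap.sum_apply]
    have hker : LinearMap.ker L = ⊥ := by
      rw [LinearMap.ker_eq_bot']
      intro g hg
      rw [hLapp] at hg
      have := Fintype.linearIndependent_iff.mp hT g hg
      funext i; exact this i
    have hemb := L.isClosedEmbedding_of_injective hker
    have hset : {x : Fin n → ℝ | ∃ g : T → ℝ, (∀ i, 0 ≤ g i) ∧ x = ∑ i : T, g i • v i}
        = L '' {g | ∀ i, 0 ≤ g i} := by
      ext x
      constructor
      · rintro ⟨g, hg0, rfl⟩; exact ⟨g, hg0, hLapp g⟩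
      · rintro ⟨g, hg0, rfl⟩; exact ⟨g, hg0, hLapp g⟩
    rw [hset]
    apply hemb.isClosedMap
    have : {g : T → ℝ | ∀ i, 0 ≤ g i} = ⋂ i, {g : T → ℝ | 0 ≤ g i} := by
      ext g; simp [Set.mem_iInter]
    rw [this]
    exact isClosed_iInter fun i => isClosed_le continuous_const (continuous_apply i)
  -- the cone is a finite union of such sub-cones
  have hunion : {x : Fin n → ℝ | ∃ l : ι → ℝ, (∀ i, 0 ≤ l i) ∧ x = ∑ i ∈ J, l i • v i}
      = ⋃ T ∈ {T : Finset ι | T ⊆ J ∧ LinearIndependent ℝ (fun i : T => v i)},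
          {x : Fin n → ℝ | ∃ g : T → ℝ, (∀ i, 0 ≤ g i) ∧ x = ∑ i : T, g i • v i} := by
    ext x
    simp only [Set.mem_setOf_eq, Set.mem_iUnion]
    constructor
    · rintro ⟨l, hl0, rfl⟩
      obtain ⟨T, hTJ, hTind, l', hl'0, hl'sum⟩ :=
        cone_caratheodory v J l (fun i _ => hl0 i)
      refine ⟨T, ⟨hTJ, hTind⟩, fun i => l' i, fun i => hl'0 i i.2, ?_⟩
      rw [← hl'sum, ← Finset.sum_attach T (fun i => l' i • v i)]
      rfl
    · rintro ⟨T, ⟨hTJ, _⟩, g, hg0, rfl⟩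
      refine ⟨fun i => if h : i ∈ T then g ⟨i, h⟩ else 0, ?_, ?_⟩
      · intro i
        by_cases h : i ∈ T
        · simpa [h] using hg0 ⟨i, h⟩
        · simp [h]
      · rw [← Finset.sum_subset hTJ (fun i _ hiT => by simp [hiT]),
          ← Finset.sum_attach T (fun i => (if h : i ∈ T then g ⟨i, h⟩ else 0) • v i)]
        exact Finset.sum_congr rfl fun i _ => by simp [i.2]
  rw [hunion]
  exact Set.Finite.isClosed_biUnion (Set.toFinite _)
    (fun T hT => hsub T hT.2)

lemma farkas_cone_s11 {n nc : ℕ} (C : Matrix (Fin nc) (Fin n) ℝ) (J : Finset (Fin nc))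
    (c : Fin n → ℝ)
    (h : ∀ d : Fin n → ℝ, (∀ i ∈ J, C i ⬝ᵥ d ≤ 0) → c ⬝ᵥ d ≤ 0) :
    ∃ l : Fin nc → ℝ, (∀ i, 0 ≤ l i) ∧ c = ∑ i ∈ J, l i • C i := by
  by_contra hc
  set K : Set (Fin n → ℝ) :=
    {x | ∃ l : Fin nc → ℝ, (∀ i, 0 ≤ l i) ∧ x = ∑ i ∈ J, l i • C i} with hK
  have hcK : c ∉ K := hc
  have hKclosed : IsClosed K := cone_isClosed (fun i => C i) J
  have hKconvex : Convex ℝ K := by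
    rintro x ⟨l₁, hl₁, rfl⟩ y ⟨l₂, hl₂, rfl⟩ a b ha hb hab
    refine ⟨fun i => a * l₁ i + b * l₂ i,
      fun i => add_nonneg (mul_nonneg ha (hl₁ i)) (mul_nonneg hb (hl₂ i)), ?_⟩
    rw [Finset.smul_sum, Finset.smul_sum, ← Finset.sum_add_distrib]
    refine Finset.sum_congr rfl fun i _ => ?_
    rw [add_smul, smul_smul, smul_smul]
  obtain ⟨f, u, hKu, huc⟩ := geometric_hahn_banach_closed_point hKconvex hKclosed hcK
  set d : Fin n → ℝ := fun j => f (Pi.single j 1) with hd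
  have hfd : ∀ y : Fin n → ℝ, f y = y ⬝ᵥ d := by
    intro y
    have h1 := (f : (Fin n → ℝ) →ₗ[ℝ] ℝ).pi_apply_eq_sum_univ y
    have h2 : ∀ j : Fin n, (fun k => if j = k then (1:ℝ) else 0) = Pi.single j 1 := by
      intro j; funext k; rw [Pi.single_apply]; simp [eq_comm]
    calc f y = ∑ j, y j • (f : (Fin n → ℝ) →ₗ[ℝ] ℝ) (fun k => if j = k then 1 else 0) := h1
      _ = ∑ j, y j * d j := by
          refine Finset.sum_congr rfl fun j _ => ?_
          rw [h2 j, smul_eq_mul, hd]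
          rfl
      _ = y ⬝ᵥ d := rfl
  have h0K : (0 : Fin n → ℝ) ∈ K := ⟨0, fun i => le_refl 0, by simp⟩
  have hu0 : 0 < u := by
    have := hKu 0 h0K
    simpa using this
  have hKle : ∀ a ∈ K, f a ≤ 0 := by
    intro a haK
    by_contra hfa
    push_neg at hfa
    obtain ⟨l, hl0, rfl⟩ := haK
    set t : ℝ := (u + 1) / f (∑ i ∈ J, l i • C i) with htt
    have htpos : 0 < t := div_pos (by linarith) hfa
    have htK : t • (∑ i ∈ J, l i • C i) ∈ K := by
      refine ⟨fun i => t * l i, fun i => mul_nonneg htpos.le (hl0 i), ?_⟩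
      rw [Finset.smul_sum]
      exact Finset.sum_congr rfl fun i _ => by simp [smul_smul]
    have := hKu _ htK
    rw [_root_.map_smul, smul_eq_mul, htt, div_mul_cancel₀ _ (ne_of_gt hfa)] at this
    linarith
  have hCd : ∀ i ∈ J, C i ⬝ᵥ d ≤ 0 := by
    intro i hiJ
    have hCiK : C i ∈ K := by
      refine ⟨fun k => if k = i then 1 else 0, fun k => by positivity, ?_⟩
      simp only [ite_smul, one_smul, zero_smul]
      rw [Finset.sum_ite_eq' J i C]
      simp [hiJ]
    have := hKle _ hCiK
    rwa [hfd] at this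
  have hcd := h d hCd
  rw [hfd] at huc
  linarith

lemma convex_polyhedron {n nc : ℕ} (C : Matrix (Fin nc) (Fin n) ℝ) (b : Fin nc → ℝ) :
    Convex ℝ {x : Fin n → ℝ | C *ᵥ x ≤ b} := by
  intro x hx y hy a a' ha ha' haa
  intro i
  have hxi : (C *ᵥ x) i ≤ b i := hx i
  have hyi : (C *ᵥ y) i ≤ b i := hy i
  have : (C *ᵥ (a • x + a' • y)) i = a * (C *ᵥ x) i + a' * (C *ᵥ y) i := by
    rw [Matrix.mulVec_add, Matrix.mulVec_smul, Matrix.mulVec_smul]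
    simp [smul_eq_mul]
  rw [this]
  calc a * (C *ᵥ x) i + a' * (C *ᵥ y) i ≤ a * b i + a' * b i := by
        apply add_le_add (mul_le_mul_of_nonneg_left hxi ha) (mul_le_mul_of_nonneg_left hyi ha')
    _ = b i := by rw [← add_mul, haa, one_mul]

lemma dotProduct_continuous {n : ℕ} (w : Fin n → ℝ) :
    Continuous fun x : Fin n → ℝ => w ⬝ᵥ x := by
  unfold dotProduct
  exact continuous_finset_sum _ fun j _ => continuous_const.mul (continuous_apply j)

lemma perturbation {n nc : ℕ} (C : Matrix (Fin nc) (Fin n) ℝ) (σ : Fin nc → ℝ)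
    (x d : Fin n → ℝ) (hx : C *ᵥ x ≤ σ)
    (h : ∀ i, C i ⬝ᵥ d ≤ 0 ∨ C i ⬝ᵥ x < σ i) :
    ∃ ε : ℝ, 0 < ε ∧ C *ᵥ (x + ε • d) ≤ σ := by
  have hev : ∀ i : Fin nc, ∀ᶠ ε in nhdsWithin (0:ℝ) (Set.Ioi 0),
      C i ⬝ᵥ x + ε * (C i ⬝ᵥ d) ≤ σ i := by
    intro i
    rcases h i with hd | hlt
    · filter_upwards [self_mem_nhdsWithin] with ε hε
      have : ε * (C i ⬝ᵥ d) ≤ 0 := mul_nonpos_of_nonneg_of_nonpos (le_of_lt hε) hd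
      have := hx i
      rw [Matrix.mulVec] at this
      linarith [this]
    · have hcont : Continuous fun ε : ℝ => C i ⬝ᵥ x + ε * (C i ⬝ᵥ d) :=
        continuous_const.add (continuous_id.mul continuous_const)
      have htend : Filter.Tendsto (fun ε : ℝ => C i ⬝ᵥ x + ε * (C i ⬝ᵥ d))
          (nhds 0) (nhds (C i ⬝ᵥ x)) := by
        have := hcont.tendsto 0
        simpa using this
      have := htend.eventually_lt_const hlt
      exact (this.filter_mono nhdsWithin_le_nhds).mono fun ε hε => le_of_lt hε
  have hall : ∀ᶠ ε in nhdsWithin (0:ℝ) (Set.Ioi 0),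
      (0 < ε ∧ ∀ i : Fin nc, C i ⬝ᵥ x + ε * (C i ⬝ᵥ d) ≤ σ i) := by
    refine Filter.Eventually.and self_mem_nhdsWithin ?_
    exact Filter.eventually_all.mpr hev
  obtain ⟨ε, hε0, hεle⟩ := hall.exists
  refine ⟨ε, hε0, fun i => ?_⟩
  have : (C *ᵥ (x + ε • d)) i = C i ⬝ᵥ x + ε * (C i ⬝ᵥ d) := by
    rw [Matrix.mulVec_add, Matrix.mulVec_smul]
    simp [Matrix.mulVec, smul_eq_mul]
  rw [this]
  exact hεle i

lemma clm_eq_dot {n : ℕ} (f : (Fin n → ℝ) →L[ℝ] ℝ) (y : Fin n → ℝ) :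
    f y = y ⬝ᵥ (fun j => f (Pi.single j 1)) := by
  have h1 := (f : (Fin n → ℝ) →ₗ[ℝ] ℝ).pi_apply_eq_sum_univ y
  have h2 : ∀ j : Fin n, (fun k => if j = k then (1:ℝ) else 0) = Pi.single j 1 := by
    intro j; funext k; rw [Pi.single_apply]; simp [eq_comm]
  calc f y = ∑ j, y j • (f : (Fin n → ℝ) →ₗ[ℝ] ℝ) (fun k => if j = k then 1 else 0) := h1
    _ = ∑ j, y j * f (Pi.single j 1) := by
        refine Finset.sum_congr rfl fun j _ => ?_
        rw [h2 j, smul_eq_mul]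
        rfl
    _ = y ⬝ᵥ (fun j => f (Pi.single j 1)) := rfl

lemma mem_smaller {n nc : ℕ} (C : Matrix (Fin nc) (Fin n) ℝ) (σ : Fin nc → ℝ)
    (x d : Fin n → ℝ) (hx : C *ᵥ x ≤ σ) {ε₁ ε : ℝ} (hε₁ : 0 < ε₁) (h0 : 0 ≤ ε)
    (hle : ε ≤ ε₁) (h1 : C *ᵥ (x + ε₁ • d) ≤ σ) : C *ᵥ (x + ε • d) ≤ σ := by
  have hmem := (convex_polyhedron C σ).add_smul_mem (y := ε₁ • d) (t := ε / ε₁) hx h1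
    ⟨div_nonneg h0 hε₁.le, div_le_one_of_le₀ hle hε₁.le⟩
  rwa [smul_smul, div_mul_cancel₀ _ (ne_of_gt hε₁)] at hmem

lemma sum_dotProduct' {n m : ℕ} (s : Finset (Fin m)) (f : Fin m → Fin n → ℝ) (y : Fin n → ℝ) :
    (∑ i ∈ s, f i) ⬝ᵥ y = ∑ i ∈ s, f i ⬝ᵥ y := by
  simp only [dotProduct, Finset.sum_apply, Finset.sum_mul]
  rw [Finset.sum_comm]

/-- Configuration-constrained vertex representation (cf. Villanueva et al., Theorem 2):
if `S(σ) = {x : C x ≤ σ}` is a nonempty, bounded, entirely simple polytope, `𝒱` collects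
the `n`-element active index sets of its vertices, and the vertex maps `V I` satisfy
`C_I (V I q) = q_I` for `I ∈ 𝒱` (i.e. `V I q = C_I⁻¹ q_I`), then every `q` satisfying
the configuration constraints `C (V I q) ≤ q` for all `I ∈ 𝒱` yields
`S(q) = conv{ V I q : I ∈ 𝒱 }`. -/
theorem configuration_constrained_vertex_representation {n nc : ℕ}
    (C : Matrix (Fin nc) (Fin n) ℝ) (σ : Fin nc → ℝ)
    (S : (Fin nc → ℝ) → Set (Fin n → ℝ))
    (hSdef : ∀ q, S q = {x | C *ᵥ x ≤ q})
    (F : Finset (Fin nc) → (Fin nc → ℝ) → Set (Fin n → ℝ))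
    (hFdef : ∀ I q, F I q = {x ∈ S q | ∀ i ∈ I, (C *ᵥ x) i = q i})
    (hne : (S σ).Nonempty) (hbd : Bornology.IsBounded (S σ))
    (hsimple : ∀ I : Finset (Fin nc), (F I σ).Nonempty →
      LinearIndependent ℝ (fun i : I => C (i : Fin nc)))
    (𝒱 : Set (Finset (Fin nc)))
    (h𝒱 : 𝒱 = {I : Finset (Fin nc) | I.card = n ∧ (F I σ).Nonempty})
    (V : Finset (Fin nc) → (Fin nc → ℝ) → (Fin n → ℝ))
    (hV : ∀ I ∈ 𝒱, ∀ q : Fin nc → ℝ, ∀ i ∈ I, C i ⬝ᵥ V I q = q i)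
    (q : Fin nc → ℝ) (hq : ∀ I ∈ 𝒱, C *ᵥ V I q ≤ q) :
    S q = convexHull ℝ ((fun I => V I q) '' 𝒱) := by
  classical
  have hclosed : ∀ b : Fin nc → ℝ, IsClosed {x : Fin n → ℝ | C *ᵥ x ≤ b} := by
    intro b
    have hset : {x : Fin n → ℝ | C *ᵥ x ≤ b} = ⋂ i, {x | C i ⬝ᵥ x ≤ b i} := by
      ext x; simp only [Set.mem_setOf_eq, Set.mem_iInter]; rfl
    rw [hset]
    exact isClosed_iInter fun i => isClosed_le (dotProduct_continuous _) continuous_const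
  have hSσclosed : IsClosed (S σ) := by rw [hSdef]; exact hclosed σ
  have hScomp : IsCompact (S σ) := Metric.isCompact_of_isClosed_isBounded hSσclosed hbd
  -- key claim: every linear functional is maximized over S(q) at some vertex map
  have key : ∀ c : Fin n → ℝ, ∃ I ∈ 𝒱, ∀ x : Fin n → ℝ, C *ᵥ x ≤ q → c ⬝ᵥ x ≤ c ⬝ᵥ V I q := by
    intro c
    obtain ⟨xs, hxsS, hxsmax⟩ := hScomp.exists_isMaxOn hne
      ((dotProduct_continuous c).continuousOn)
    have hxsσ : C *ᵥ xs ≤ σ := by rw [hSdef] at hxsS; exact hxsS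
    set J : Finset (Fin nc) := Finset.univ.filter (fun i => C i ⬝ᵥ xs = σ i) with hJ
    have hfark : ∀ d : Fin n → ℝ, (∀ i ∈ J, C i ⬝ᵥ d ≤ 0) → c ⬝ᵥ d ≤ 0 := by
      intro d hd
      by_contra hcd
      push_neg at hcd
      have hcond : ∀ i, C i ⬝ᵥ d ≤ 0 ∨ C i ⬝ᵥ xs < σ i := by
        intro i
        by_cases hi : i ∈ J
        · exact Or.inl (hd i hi)
        · refine Or.inr (lt_of_le_of_ne (hxsσ i) ?_)
          simpa [hJ] using hi
      obtain ⟨ε, hε0, hεS⟩ := perturbation C σ xs d hxsσ hcond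
      have hmem : xs + ε • d ∈ S σ := by rw [hSdef]; exact hεS
      have hmax := hxsmax hmem
      have hexp : c ⬝ᵥ (xs + ε • d) = c ⬝ᵥ xs + ε * (c ⬝ᵥ d) := by
        rw [dotProduct_add, dotProduct_smul]
        simp [smul_eq_mul]
      simp only [Set.mem_setOf_eq] at hmax
      rw [hexp] at hmax
      nlinarith [mul_pos hε0 hcd]
    obtain ⟨l, hl0, hcl⟩ := farkas_cone_s11 C J c hfark
    have hxsF : xs ∈ F J σ := by
      rw [hFdef]
      exact ⟨hxsS, fun i hi => by exact (by simpa [hJ] using hi : C i ⬝ᵥ xs = σ i)⟩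
    have hFclosed : IsClosed (F J σ) := by
      rw [hFdef]
      have hset : {x ∈ S σ | ∀ i ∈ J, (C *ᵥ x) i = σ i}
          = S σ ∩ ⋂ i ∈ J, {x | C i ⬝ᵥ x = σ i} := by
        ext x
        simp only [Set.mem_setOf_eq, Set.mem_inter_iff, Set.mem_iInter]
        rfl
      rw [hset]
      exact hSσclosed.inter (isClosed_biInter fun i _ =>
        isClosed_eq (dotProduct_continuous _) continuous_const)
    have hFcomp : IsCompact (F J σ) := by
      apply Metric.isCompact_of_isClosed_isBounded hFclosed
      apply hbd.subset
      rw [hFdef]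
      intro x hx
      exact hx.1
    obtain ⟨x₀, hx₀⟩ := hFcomp.extremePoints_nonempty ⟨xs, hxsF⟩
    have hx₀F : x₀ ∈ F J σ := hx₀.1
    have hx₀S : x₀ ∈ S σ := by rw [hFdef] at hx₀F; exact hx₀F.1
    have hx₀σ : C *ᵥ x₀ ≤ σ := by rw [hSdef] at hx₀S; exact hx₀S
    set I : Finset (Fin nc) := Finset.univ.filter (fun i => C i ⬝ᵥ x₀ = σ i) with hI
    have hJI : J ⊆ I := by
      intro i hi
      rw [hFdef] at hx₀F
      have := hx₀F.2 i hi
      simp only [hI, Finset.mem_filter, Finset.mem_univ, true_and]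
      exact this
    have hx₀FI : x₀ ∈ F I σ := by
      rw [hFdef]
      exact ⟨hx₀S, fun i hi => by exact (by simpa [hI] using hi : C i ⬝ᵥ x₀ = σ i)⟩
    -- the active rows at x₀ span (no nonzero vector is orthogonal to all of them)
    have hinj : ∀ d : Fin n → ℝ, (∀ i ∈ I, C i ⬝ᵥ d = 0) → d = 0 := by
      intro d hd
      have h1 : ∀ i, C i ⬝ᵥ d ≤ 0 ∨ C i ⬝ᵥ x₀ < σ i := by
        intro i
        by_cases hi : i ∈ I
        · exact Or.inl (le_of_eq (hd i hi))
        · refine Or.inr (lt_of_le_of_ne (hx₀σ i) ?_)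
          simpa [hI] using hi
      have h2 : ∀ i, C i ⬝ᵥ (-d) ≤ 0 ∨ C i ⬝ᵥ x₀ < σ i := by
        intro i
        by_cases hi : i ∈ I
        · left
          rw [dotProduct_neg, hd i hi, neg_zero]
        · refine Or.inr (lt_of_le_of_ne (hx₀σ i) ?_)
          simpa [hI] using hi
      obtain ⟨ε₁, hε₁, hS₁⟩ := perturbation C σ x₀ d hx₀σ h1
      obtain ⟨ε₂, hε₂, hS₂⟩ := perturbation C σ x₀ (-d) hx₀σ h2
      set ε := min ε₁ ε₂ with hεdef
      have hε : 0 < ε := lt_min hε₁ hε₂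
      have hy₁ : C *ᵥ (x₀ + ε • d) ≤ σ :=
        mem_smaller C σ x₀ d hx₀σ hε₁ hε.le (min_le_left _ _) hS₁
      have hy₂ : C *ᵥ (x₀ + ε • (-d)) ≤ σ :=
        mem_smaller C σ x₀ (-d) hx₀σ hε₂ hε.le (min_le_right _ _) hS₂
      have hJd : ∀ i ∈ J, C i ⬝ᵥ d = 0 := fun i hi => hd i (hJI hi)
      have hx₀act : ∀ i ∈ J, C i ⬝ᵥ x₀ = σ i := by
        rw [hFdef] at hx₀F
        exact fun i hi => hx₀F.2 i hi
      have hy₁F : x₀ + ε • d ∈ F J σ := by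
        rw [hFdef]
        refine ⟨by rw [hSdef]; exact hy₁, fun i hi => ?_⟩
        have hexp : (C *ᵥ (x₀ + ε • d)) i = C i ⬝ᵥ x₀ + ε * (C i ⬝ᵥ d) := by
          rw [Matrix.mulVec_add, Matrix.mulVec_smul]
          simp [Matrix.mulVec, smul_eq_mul]
        rw [hexp, hJd i hi, mul_zero, add_zero]
        exact hx₀act i hi
      have hy₂F : x₀ + ε • (-d) ∈ F J σ := by
        rw [hFdef]
        refine ⟨by rw [hSdef]; exact hy₂, fun i hi => ?_⟩
        have hexp : (C *ᵥ (x₀ + ε • (-d))) i = C i ⬝ᵥ x₀ + ε * (C i ⬝ᵥ (-d)) := by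
          rw [Matrix.mulVec_add, Matrix.mulVec_smul]
          simp [Matrix.mulVec, smul_eq_mul]
        rw [hexp, dotProduct_neg, hJd i hi, neg_zero, mul_zero, add_zero]
        exact hx₀act i hi
      have hseg : x₀ ∈ openSegment ℝ (x₀ + ε • (-d)) (x₀ + ε • d) := by
        refine ⟨1/2, 1/2, by norm_num, by norm_num, by norm_num, ?_⟩
        funext j
        simp only [Pi.add_apply, Pi.smul_apply, Pi.neg_apply, smul_eq_mul]
        ring
      obtain ⟨-, hxext⟩ := mem_extremePoints.mp hx₀
      obtain ⟨-, h2eq⟩ := hxext (x₀ + ε • (-d)) hy₂F (x₀ + ε • d) hy₁F hseg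
      have hεd : ε • d = 0 := by
        have := h2eq
        rwa [add_eq_left] at this
      rcases smul_eq_zero.mp hεd with h | h
      · exact absurd h (ne_of_gt hε)
      · exact h
    have hIind := hsimple I ⟨x₀, hx₀FI⟩
    have hcard_le : I.card ≤ n := by
      have hc := hIind.fintype_card_le_finrank
      simpa [Module.finrank_fin_fun, Fintype.card_coe] using hc
    have hcard_ge : n ≤ I.card := by
      set M : Matrix I (Fin n) ℝ := Matrix.of (fun (i : I) j => C i j) with hM
      have hker : LinearMap.ker M.mulVecLin = ⊥ := by
        rw [LinearMap.ker_eq_bot']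
        intro d hdk
        apply hinj d
        intro i hi
        have hz : (M *ᵥ d) ⟨i, hi⟩ = 0 := by
          rw [show M *ᵥ d = 0 from hdk]
          rfl
        exact hz
      have hle := LinearMap.finrank_le_finrank_of_injective (LinearMap.ker_eq_bot.mp hker)
      simpa [Module.finrank_fin_fun, Module.finrank_fintype_fun_eq_card,
        Fintype.card_coe] using hle
    have hIcard : I.card = n := le_antisymm hcard_le hcard_ge
    have hImem : I ∈ 𝒱 := by rw [h𝒱]; exact ⟨hIcard, ⟨x₀, hx₀FI⟩⟩
    refine ⟨I, hImem, fun x hxq => ?_⟩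
    have hexp : ∀ y : Fin n → ℝ, c ⬝ᵥ y = ∑ i ∈ J, l i * (C i ⬝ᵥ y) := by
      intro y
      rw [hcl, sum_dotProduct']
      refine Finset.sum_congr rfl fun i _ => ?_
      rw [smul_dotProduct, smul_eq_mul]
    rw [hexp x, hexp (V I q)]
    refine Finset.sum_le_sum fun i hi => ?_
    have h2 : C i ⬝ᵥ V I q = q i := hV I hImem q i (hJI hi)
    rw [h2]
    exact mul_le_mul_of_nonneg_left (hxq i) (hl0 i)
  -- main proof
  rw [hSdef]
  apply Set.Subset.antisymm
  · intro x hx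
    by_contra hxK
    have hKvclosed : IsClosed (convexHull ℝ ((fun I => V I q) '' 𝒱)) :=
      (Set.Finite.isCompact_convexHull (𝕜 := ℝ) ((Set.toFinite 𝒱).image _)).isClosed
    obtain ⟨f, u, hfu, hux⟩ :=
      geometric_hahn_banach_closed_point (convex_convexHull ℝ _) hKvclosed hxK
    set c : Fin n → ℝ := fun j => f (Pi.single j 1) with hc
    obtain ⟨I, hI, hle⟩ := key c
    have hVK : V I q ∈ convexHull ℝ ((fun I => V I q) '' 𝒱) :=
      subset_convexHull ℝ _ ⟨I, hI, rfl⟩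
    have h1 : f (V I q) < u := hfu _ hVK
    rw [clm_eq_dot] at h1 hux
    rw [← hc] at h1 hux
    rw [dotProduct_comm] at h1 hux
    have h2 : c ⬝ᵥ x ≤ c ⬝ᵥ V I q := hle x hx
    linarith
  · apply convexHull_min
    · rintro y ⟨I, hI, rfl⟩
      exact hq I hI
    · exact convex_polyhedron C q
end

section
/- (Correctness of the data-driven RCI construction) Let C ∈ ℝ^{n_c×n}, q ∈ ℝ^{n_c} and S(q) = { x ∈ ℝⁿ : C x ≤ q }. Suppose there are linear maps V¹,…,V^{v_s} : ℝ^{n_c} → ℝⁿ with S(q) = convexHull{ Vⁱq : i = 1,…,v_s }. Let 𝒳 = { x : H_x x ≤ h_x } and 𝒰 = { u : H_u u ≤ h_u } for given matrices/vectors H_x, h_x, H_u, h_u, let P = convexHull{p¹,…,p^{v_p}} ⊆ ℝ^s, let W ⊆ ℝⁿ be nonempty and compact with d ∈ ℝ^{n_c} defined by d_i = max{ (Cw)_i : w ∈ W }, and let ℳ ⊆ ℝ^{n×(n+m)s} be any set of matrices. Assume there exist u¹,…,u^{v_s} ∈ ℝ^m such that for all i ∈ {1,…,v_s}: H_x Vⁱq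 ≤ h_x and H_u uⁱ ≤ h_u, and for all i ∈ {1,…,v_s}, j ∈ {1,…,v_p} and all M ∈ ℳ: C · ( M·[pʲ⊗(Vⁱq); pʲ⊗uⁱ] ) ≤ q − d. Then: (a) S(q) ⊆ 𝒳, and (b) for every x ∈ S(q) there exists u ∈ 𝒰 such that for every p ∈ P, every M ∈ ℳ and every w ∈ W, M·[p⊗x; p⊗u] + w ∈ S(q). -/
open Matrix

private lemma mulVec_sum' {a b : ℕ} (A : Matrix (Fin a) (Fin b) ℝ) {ι : Type} (t : Finset ι)
    (f : ι → (Fin b → ℝ)) : A *ᵥ (∑ k ∈ t, f k) = ∑ k ∈ t, A *ᵥ f k := by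
  simp only [← Matrix.mulVecLin_apply, map_sum]

/-- Correctness of the data-driven RCI construction: if `S(q) = {x : C x ≤ q}` admits the
vertex representation `S(q) = conv{Vⁱ q}`, the vertices satisfy the state constraints, the
vertex inputs satisfy the input constraints, and the tightened invariance condition
`C·(M·[pʲ⊗(Vⁱq); pʲ⊗uⁱ]) ≤ q - d` holds for all vertices, parameter vertices and all
models `M ∈ ℳ`, then (a) `S(q) ⊆ 𝒳` and (b) for every `x ∈ S(q)` there is an admissible
input keeping the successor state in `S(q)` for every `p ∈ P`, `M ∈ ℳ`, `w ∈ W`. -/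
theorem data_driven_RCI_correctness {n m s nc vs vp nx nu : ℕ}
    (C : Matrix (Fin nc) (Fin n) ℝ) (q : Fin nc → ℝ)
    (S : Set (Fin n → ℝ)) (hSdef : S = {x | C *ᵥ x ≤ q})
    (V : Fin vs → ((Fin nc → ℝ) →ₗ[ℝ] (Fin n → ℝ)))
    (hSvert : S = convexHull ℝ (Set.range fun i => V i q))
    (Hx : Matrix (Fin nx) (Fin n) ℝ) (hx : Fin nx → ℝ)
    (Hu : Matrix (Fin nu) (Fin m) ℝ) (hu : Fin nu → ℝ)
    (p : Fin vp → (Fin s → ℝ))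
    (W : Set (Fin n → ℝ)) (hWne : W.Nonempty) (hWc : IsCompact W)
    (d : Fin nc → ℝ)
    (hd : ∀ i : Fin nc, IsGreatest ((fun w => (C *ᵥ w) i) '' W) (d i))
    (ℳ : Set (Matrix (Fin n) ((Fin s × Fin n) ⊕ (Fin s × Fin m)) ℝ))
    (u : Fin vs → (Fin m → ℝ))
    (hstate : ∀ i, Hx *ᵥ (V i q) ≤ hx)
    (hinput : ∀ i, Hu *ᵥ (u i) ≤ hu)
    (hinv : ∀ (i : Fin vs) (j : Fin vp), ∀ M ∈ ℳ,
      C *ᵥ (M *ᵥ Sum.elim (vkron (p j) (V i q)) (vkron (p j) (u i))) ≤ q - d) :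
    (S ⊆ {x | Hx *ᵥ x ≤ hx}) ∧
      ∀ x ∈ S, ∃ u₀ : Fin m → ℝ, Hu *ᵥ u₀ ≤ hu ∧
        ∀ p₀ ∈ convexHull ℝ (Set.range p), ∀ M ∈ ℳ, ∀ w ∈ W,
          M *ᵥ Sum.elim (vkron p₀ x) (vkron p₀ u₀) + w ∈ S := by
  classical
  have hconv : ∀ {a b : ℕ} (A : Matrix (Fin a) (Fin b) ℝ) (c : Fin a → ℝ),
      Convex ℝ {x : Fin b → ℝ | A *ᵥ x ≤ c} := by
    intro a b A c y hy z hz α β hα hβ hαβ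
    simp only [Set.mem_setOf_eq] at hy hz ⊢
    intro i
    have h : A *ᵥ (α • y + β • z) = α • (A *ᵥ y) + β • (A *ᵥ z) := by
      rw [Matrix.mulVec_add, Matrix.mulVec_smul, Matrix.mulVec_smul]
    rw [h]
    simp only [Pi.add_apply, Pi.smul_apply, smul_eq_mul]
    calc α * (A *ᵥ y) i + β * (A *ᵥ z) i ≤ α * c i + β * c i :=
          add_le_add (mul_le_mul_of_nonneg_left (hy i) hα) (mul_le_mul_of_nonneg_left (hz i) hβ)
      _ = c i := by rw [← add_mul, hαβ, one_mul]
  refine ⟨?_, ?_⟩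
  · rw [hSvert]
    refine convexHull_min ?_ (hconv Hx hx)
    rintro _ ⟨i, rfl⟩
    exact hstate i
  · intro x hxS
    have hx' := hxS
    rw [hSvert, convexHull_eq] at hx'
    obtain ⟨ι, t, wt, z, hwt0, hwt1, hzmem, hcm⟩ := hx'
    have htne : t.Nonempty := Finset.nonempty_of_sum_ne_zero (by rw [hwt1]; norm_num)
    obtain ⟨k₀, hk₀⟩ := htne
    obtain ⟨i₀, -⟩ := hzmem k₀ hk₀
    haveI : Nonempty (Fin vs) := ⟨i₀⟩
    set g : ι → Fin vs := fun k =>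
      if h : ∃ i, V i q = z k then h.choose else Classical.arbitrary _ with hgdef
    have hg : ∀ k ∈ t, V (g k) q = z k := by
      intro k hk
      obtain ⟨i, hi⟩ := hzmem k hk
      have h : ∃ i, V i q = z k := ⟨i, hi⟩
      simp only [hgdef, dif_pos h]
      exact h.choose_spec
    have hxrep : x = ∑ k ∈ t, wt k • V (g k) q := by
      rw [← hcm, Finset.centerMass_eq_of_sum_1 _ _ hwt1]
      exact Finset.sum_congr rfl fun k hk => by rw [hg k hk]
    refine ⟨∑ k ∈ t, wt k • u (g k), ?_, ?_⟩
    · -- input constraint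
      intro j
      have h1 : Hu *ᵥ (∑ k ∈ t, wt k • u (g k)) = ∑ k ∈ t, wt k • (Hu *ᵥ u (g k)) := by
        rw [mulVec_sum']
        exact Finset.sum_congr rfl fun k _ => Matrix.mulVec_smul _ _ _
      rw [h1, Finset.sum_apply]
      calc ∑ k ∈ t, (wt k • (Hu *ᵥ u (g k))) j
          ≤ ∑ k ∈ t, wt k * hu j := Finset.sum_le_sum (fun k hk => by
            simp only [Pi.smul_apply, smul_eq_mul]
            exact mul_le_mul_of_nonneg_left (hinput (g k) j) (hwt0 k hk))
        _ = hu j := by rw [← Finset.sum_mul, hwt1, one_mul]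
    · intro p₀ hp₀ M hM w0 hw0
      rw [convexHull_eq] at hp₀
      obtain ⟨ι', t', wt', z', hwt0', hwt1', hzmem', hcm'⟩ := hp₀
      have htne' : t'.Nonempty := Finset.nonempty_of_sum_ne_zero (by rw [hwt1']; norm_num)
      obtain ⟨l₀, hl₀⟩ := htne'
      obtain ⟨j₀, -⟩ := hzmem' l₀ hl₀
      haveI : Nonempty (Fin vp) := ⟨j₀⟩
      set g' : ι' → Fin vp := fun l =>
        if h : ∃ j, p j = z' l then h.choose else Classical.arbitrary _ with hg'def
      have hg' : ∀ l ∈ t', p (g' l) = z' l := by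
        intro l hl
        obtain ⟨j, hj⟩ := hzmem' l hl
        have h : ∃ j, p j = z' l := ⟨j, hj⟩
        simp only [hg'def, dif_pos h]
        exact h.choose_spec
      have hprep : p₀ = ∑ l ∈ t', wt' l • p (g' l) := by
        rw [← hcm', Finset.centerMass_eq_of_sum_1 _ _ hwt1']
        exact Finset.sum_congr rfl fun l hl => by rw [hg' l hl]
      -- bilinear expansion
      have hZ : Sum.elim (vkron p₀ x) (vkron p₀ (∑ k ∈ t, wt k • u (g k)))
          = ∑ l ∈ t', ∑ k ∈ t, (wt' l * wt k) •
              Sum.elim (vkron (p (g' l)) (V (g k) q)) (vkron (p (g' l)) (u (g k))) := by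
        funext idx
        have hp : ∀ j, p₀ j = ∑ l ∈ t', wt' l * p (g' l) j := by
          intro j; rw [hprep]; simp [Finset.sum_apply]
        have hxc : ∀ i, x i = ∑ k ∈ t, wt k * V (g k) q i := by
          intro i; rw [hxrep]; simp [Finset.sum_apply]
        have huc : ∀ j, (∑ k ∈ t, wt k • u (g k)) j = ∑ k ∈ t, wt k * u (g k) j := by
          intro j; simp [Finset.sum_apply]
        cases idx with
        | inl ji =>
          simp only [Sum.elim_inl, vkron, Finset.sum_apply, Pi.smul_apply, smul_eq_mul]
          rw [hp ji.1, hxc ji.2, Finset.sum_mul_sum]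
          exact Finset.sum_congr rfl fun l _ => Finset.sum_congr rfl fun k _ => by ring
        | inr ji =>
          simp only [Sum.elim_inr, vkron, Finset.sum_apply, Pi.smul_apply, smul_eq_mul]
          rw [hp ji.1, Finset.sum_mul_sum]
          exact Finset.sum_congr rfl fun l _ => Finset.sum_congr rfl fun k _ => by ring
      rw [hSdef]
      intro r
      have hCM : C *ᵥ (M *ᵥ Sum.elim (vkron p₀ x) (vkron p₀ (∑ k ∈ t, wt k • u (g k))))
          = ∑ l ∈ t', ∑ k ∈ t, (wt' l * wt k) •
              (C *ᵥ (M *ᵥ Sum.elim (vkron (p (g' l)) (V (g k) q))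
                (vkron (p (g' l)) (u (g k))))) := by
        rw [hZ]
        simp only [← Matrix.mulVecLin_apply, map_sum, _root_.map_smul]
      have hc1 : ∑ l ∈ t', ∑ k ∈ t, wt' l * wt k = 1 := by
        rw [← Finset.sum_mul_sum, hwt1', hwt1, one_mul]
      have hbound : (C *ᵥ (M *ᵥ Sum.elim (vkron p₀ x)
          (vkron p₀ (∑ k ∈ t, wt k • u (g k))))) r ≤ q r - d r := by
        rw [hCM, Finset.sum_apply]
        calc ∑ l ∈ t', (∑ k ∈ t, (wt' l * wt k) •
                (C *ᵥ (M *ᵥ Sum.elim (vkron (p (g' l)) (V (g k) q))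
                  (vkron (p (g' l)) (u (g k)))))) r
            = ∑ l ∈ t', ∑ k ∈ t, (wt' l * wt k) *
                (C *ᵥ (M *ᵥ Sum.elim (vkron (p (g' l)) (V (g k) q))
                  (vkron (p (g' l)) (u (g k))))) r := by
              exact Finset.sum_congr rfl fun l _ => by simp [Finset.sum_apply]
          _ ≤ ∑ l ∈ t', ∑ k ∈ t, (wt' l * wt k) * (q r - d r) := by
              refine Finset.sum_le_sum fun l hl => Finset.sum_le_sum fun k hk => ?_
              have h1 := hinv (g k) (g' l) M hM r
              have h2 : (q - d) r = q r - d r := rfl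
              rw [h2] at h1
              exact mul_le_mul_of_nonneg_left h1 (mul_nonneg (hwt0' l hl) (hwt0 k hk))
          _ = (q r - d r) := by
              simp only [← Finset.sum_mul]
              rw [hc1, one_mul]
      have hw0b : (C *ᵥ w0) r ≤ d r := (hd r).2 ⟨w0, hw0, rfl⟩
      have : (C *ᵥ (M *ᵥ Sum.elim (vkron p₀ x) (vkron p₀ (∑ k ∈ t, wt k • u (g k))) + w0)) r
          = (C *ᵥ (M *ᵥ Sum.elim (vkron p₀ x) (vkron p₀ (∑ k ∈ t, wt k • u (g k))))) r
            + (C *ᵥ w0) r := by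
        rw [Matrix.mulVec_add]; rfl
      rw [this]
      linarith
end
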